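/- Suppose the next-stage value blocks are outer products: V_{xx}^{t+1} = z zᵀ, V_{x x_r}^{t+1} = z z_rᵀ, and V_{x_r x_r}^{t+1} = z_r z_rᵀ for vectors z ∈ ℝ^{n'}, z_r ∈ ℝʳ. Let F_x ∈ ℝ^{n'×n}, F_u ∈ ℝ^{n'×m}, and Q_uu ∈ ℝ^{m×m} symmetric invertible, and set q_x = F_xᵀ z, q_u = F_uᵀ z, K = −Q_uu⁻¹ (F_uᵀ V_{xx}^{t+1} F_x), G = −Q_uu⁻¹ F_uᵀ V_{x x_r}^{t+1}, c = 1 − q_uᵀ Q_uu⁻¹ q_u. Then the GT-DDP residual value recursions yield V_{x x_r}^t := F_xᵀ V_{x x_r}^{t+1} − Kᵀ Q_uu G = c · q_x z_rᵀ and V_{x_r x_r}^t := V_{x_r x_r}^{t+1} − Gᵀ Q_uu G = c · z_r z_rᵀ; that is, the outer-product factorization propagates through a residual block, with the residual vector rescaled by the same scalar factor at each stage. -/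

import Mathlib

open Matrix

section Helpers

variable {α β γ : Type*} [Fintype α] [Fintype β] [Fintype γ]

lemma mul_vecMulVec (M : Matrix α β ℝ) (a : β → ℝ) (b : γ → ℝ) :
    M * vecMulVec a b = vecMulVec (M *ᵥ a) b := by
  ext i j
  simp [Matrix.mul_apply, vecMulVec_apply, mulVec, dotProduct, Finset.sum_mul, mul_assoc]

lemma vecMulVec_mul (a : α → ℝ) (b : β → ℝ) (M : Matrix β γ ℝ) :
    vecMulVec a b * M = vecMulVec a (Mᵀ *ᵥ b) := by
  ext i j
  simp [Matrix.mul_apply, vecMulVec_apply, mulVec, dotProduct, Finset.mul_sum]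
  exact Finset.sum_congr rfl fun x _ => by ring

lemma vecMulVec_mul_vecMulVec (a : α → ℝ) (b c : β → ℝ) (d : γ → ℝ) :
    vecMulVec a b * vecMulVec c d = (b ⬝ᵥ c) • vecMulVec a d := by
  ext i j
  simp [Matrix.mul_apply, vecMulVec_apply, dotProduct, Finset.sum_mul, Finset.mul_sum]
  ring_nf
  exact Finset.sum_congr rfl fun x _ => by ring

lemma vecMulVec_transpose (a : α → ℝ) (b : β → ℝ) :
    (vecMulVec a b)ᵀ = vecMulVec b a := by
  ext i j
  simp [vecMulVec_apply, mul_comm]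

end Helpers

/-- The outer-product factorization propagates through a residual block:
V_{x x_r}^t = c·q_x z_rᵀ and V_{x_r x_r}^t = c·z_r z_rᵀ with the same scalar c. -/
theorem gtddp_residual_outer_product {n npr m r : ℕ}
    (z : Fin npr → ℝ) (zr : Fin r → ℝ)
    (Fx : Matrix (Fin npr) (Fin n) ℝ) (Fu : Matrix (Fin npr) (Fin m) ℝ)
    (Quu : Matrix (Fin m) (Fin m) ℝ)
    (hsymm : Quu.IsSymm) (hinv : IsUnit Quu.det) :
    let Vxx1 := vecMulVec z z
    let Vxxr1 := vecMulVec z zr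
    let Vxrxr1 := vecMulVec zr zr
    let qx := Fxᵀ *ᵥ z
    let qu := Fuᵀ *ᵥ z
    let K := -(Quu⁻¹ * (Fuᵀ * Vxx1 * Fx))
    let G := -(Quu⁻¹ * (Fuᵀ * Vxxr1))
    let c := 1 - qu ⬝ᵥ (Quu⁻¹ *ᵥ qu)
    Fxᵀ * Vxxr1 - Kᵀ * Quu * G = c • vecMulVec qx zr
      ∧ Vxrxr1 - Gᵀ * Quu * G = c • vecMulVec zr zr := by
  intro Vxx1 Vxxr1 Vxrxr1 qx qu K G c
  set w : Fin m → ℝ := Quu⁻¹ *ᵥ qu with hw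
  have hKG : K = -(vecMulVec (Quu⁻¹ *ᵥ qu) qx) ∧ G = -(vecMulVec (Quu⁻¹ *ᵥ qu) zr) := by
    constructor
    · show -(Quu⁻¹ * (Fuᵀ * vecMulVec z z * Fx)) = _
      rw [_root_.mul_vecMulVec, _root_.vecMulVec_mul, _root_.mul_vecMulVec]
    · show -(Quu⁻¹ * (Fuᵀ * vecMulVec z zr)) = _
      rw [_root_.mul_vecMulVec, _root_.mul_vecMulVec]
  have hQw : Quuᵀ *ᵥ w = qu := by
    rw [hsymm.eq, hw, mulVec_mulVec, mul_nonsing_inv Quu hinv, one_mulVec]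
  have hKQ : Kᵀ * Quu = -(vecMulVec qx qu) := by
    rw [hKG.1, transpose_neg, vecMulVec_transpose, Matrix.neg_mul, _root_.vecMulVec_mul, ← hw, hQw]
  have hGQ : Gᵀ * Quu = -(vecMulVec zr qu) := by
    rw [hKG.2, transpose_neg, vecMulVec_transpose, Matrix.neg_mul, _root_.vecMulVec_mul, ← hw, hQw]
  constructor
  · show Fxᵀ * vecMulVec z zr - Kᵀ * Quu * G = _
    rw [hKQ, hKG.2, _root_.mul_vecMulVec, Matrix.neg_mul, Matrix.mul_neg, neg_neg, _root_.vecMulVec_mul_vecMulVec, ← hw]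
    have : c = 1 - qu ⬝ᵥ w := rfl
    rw [this, sub_smul, one_smul]
  · show vecMulVec zr zr - Gᵀ * Quu * G = _
    rw [hGQ, hKG.2, Matrix.neg_mul, Matrix.mul_neg, neg_neg, _root_.vecMulVec_mul_vecMulVec, ← hw]
    have : c = 1 - qu ⬝ᵥ w := rfl
    rw [this, sub_smul, one_smul]
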